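/- Let s(0),...,s(k) take values in countable prefix-free sets of binary codewords with expected lengths R(i), and let y^k, S^k be arbitrary discrete random variables on a finite probability space. Then sum_{i=0}^{k} R(i) >= sum_{i=0}^{k} I(s(i); y^i | s^{i-1}, S^i), where s^{i-1} = (s(0),...,s(i-1)), y^i = (y(0),...,y(i)), S^i = (S(0),...,S(i)). -/

import Mathlib

open Finset Real

variable {Ω : Type*}

/-- Probability that the random variable `X` takes the value `x`,
under the probability mass function `p` on the finite space `Ω`. -/
noncomputable def pr [Fintype Ω] (p : Ω → ℝ) {α : Type*} [DecidableEq α]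
    (X : Ω → α) (x : α) : ℝ :=
  ∑ ω, if X ω = x then p ω else 0

/-- Shannon entropy (in bits) of a discrete random variable. -/
noncomputable def ent [Fintype Ω] (p : Ω → ℝ) {α : Type*} [DecidableEq α]
    (X : Ω → α) : ℝ :=
  -∑ x ∈ Finset.univ.image X, pr p X x * Real.logb 2 (pr p X x)

/-- Conditional entropy `H(X|Z) = H(X,Z) - H(Z)`. -/
noncomputable def condEnt [Fintype Ω] (p : Ω → ℝ) {α β : Type*}
    [DecidableEq α] [DecidableEq β] (X : Ω → α) (Z : Ω → β) : ℝ :=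
  ent p (fun ω => (X ω, Z ω)) - ent p Z

/-- Mutual information `I(X;Y) = H(X) + H(Y) - H(X,Y)`. -/
noncomputable def mi [Fintype Ω] (p : Ω → ℝ) {α β : Type*}
    [DecidableEq α] [DecidableEq β] (X : Ω → α) (Y : Ω → β) : ℝ :=
  ent p X + ent p Y - ent p (fun ω => (X ω, Y ω))

/-- Conditional mutual information `I(X;Y|Z) = H(X|Z) + H(Y|Z) - H(X,Y|Z)`. -/
noncomputable def cmi [Fintype Ω] (p : Ω → ℝ) {α β γ : Type*}
    [DecidableEq α] [DecidableEq β] [DecidableEq γ]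
    (X : Ω → α) (Y : Ω → β) (Z : Ω → γ) : ℝ :=
  condEnt p X Z + condEnt p Y Z - condEnt p (fun ω => (X ω, Y ω)) Z

/-- `X` and `Y` are conditionally independent given `Z`:
`P(X=x, Y=y | Z=z) = P(X=x|Z=z) P(Y=y|Z=z)` whenever `P(Z=z) > 0`. -/
def CondIndep [Fintype Ω] (p : Ω → ℝ) {α β γ : Type*}
    [DecidableEq α] [DecidableEq β] [DecidableEq γ]
    (X : Ω → α) (Y : Ω → β) (Z : Ω → γ) : Prop :=
  ∀ x y z, 0 < pr p Z z →
    pr p (fun ω => (X ω, Y ω, Z ω)) (x, y, z) / pr p Z z =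
      (pr p (fun ω => (X ω, Z ω)) (x, z) / pr p Z z) *
        (pr p (fun ω => (Y ω, Z ω)) (y, z) / pr p Z z)

/-- A set of binary codewords is prefix-free if no codeword is a
(proper or improper) prefix of a different codeword. -/
def PrefixFreeOn (S : Set (List Bool)) : Prop :=
  ∀ a ∈ S, ∀ b ∈ S, a <+: b → a = b

section Aux

variable [Fintype Ω] (p : Ω → ℝ)

lemma pr_nonneg (hp : ∀ ω, 0 ≤ p ω) {α : Type*} [DecidableEq α]
    (X : Ω → α) (x : α) : 0 ≤ pr p X x :=
  Finset.sum_nonneg fun ω _ => by split; exacts [hp ω, le_rfl]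

lemma p_le_pr (hp : ∀ ω, 0 ≤ p ω) {α : Type*} [DecidableEq α]
    (X : Ω → α) (ω : Ω) : p ω ≤ pr p X (X ω) := by
  classical
  unfold pr
  have := Finset.single_le_sum (f := fun ω' => if X ω' = X ω then p ω' else 0)
    (fun ω' _ => by split; exacts [hp ω', le_rfl]) (Finset.mem_univ ω)
  simpa using this

/-- Grouping a sum over `ω` by the value of `X`. -/
lemma sum_comp_eq {α : Type*} [DecidableEq α] (X : Ω → α) (f : α → ℝ) :
    ∑ x ∈ Finset.univ.image X, pr p X x * f x = ∑ ω, p ω * f (X ω) := by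
  classical
  unfold pr
  simp_rw [Finset.sum_mul, ite_mul, zero_mul]
  rw [Finset.sum_comm]
  refine Finset.sum_congr rfl fun ω _ => ?_
  rw [Finset.sum_ite_eq]
  simp

lemma sum_pr_eq_one (hp1 : ∑ ω, p ω = 1) {α : Type*} [DecidableEq α] (X : Ω → α) :
    ∑ x ∈ Finset.univ.image X, pr p X x = 1 := by
  have := sum_comp_eq p X (fun _ => (1:ℝ))
  simpa [hp1] using this

/-- Entropy as a sum over sample points. -/
lemma ent_eq_sum_omega {α : Type*} [DecidableEq α] (X : Ω → α) :
    ent p X = -∑ ω, p ω * Real.logb 2 (pr p X (X ω)) := by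
  rw [ent, sum_comp_eq p X (fun x => Real.logb 2 (pr p X x))]

lemma sum_pmul_congr (hp : ∀ ω, 0 ≤ p ω) {A B : Ω → ℝ}
    (h : ∀ ω, 0 < p ω → A ω = B ω) :
    ∑ ω, p ω * A ω = ∑ ω, p ω * B ω := by
  refine Finset.sum_congr rfl fun ω _ => ?_
  rcases eq_or_lt_of_le (hp ω) with h0 | h0
  · rw [← h0]; ring
  · rw [h ω h0]

/-- Gibbs-type core inequality. -/
lemma gibbs (hp : ∀ ω, 0 ≤ p ω) (hp1 : ∑ ω, p ω = 1) (r : Ω → ℝ)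
    (hr : ∀ ω, 0 < p ω → 0 < r ω) (hsum : ∑ ω, p ω * r ω ≤ 1) :
    ∑ ω, p ω * Real.logb 2 (r ω) ≤ 0 := by
  have hlog2 : (0:ℝ) < Real.log 2 := Real.log_pos (by norm_num)
  have key : ∀ ω, p ω * Real.logb 2 (r ω) ≤ p ω * ((r ω - 1) / Real.log 2) := by
    intro ω
    rcases eq_or_lt_of_le (hp ω) with h0 | h0
    · rw [← h0]; simp
    · refine mul_le_mul_of_nonneg_left ?_ h0.le
      rw [Real.logb, div_le_div_iff_of_pos_right hlog2]
      exact Real.log_le_sub_one_of_pos (hr ω h0)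
  calc ∑ ω, p ω * Real.logb 2 (r ω) ≤ ∑ ω, p ω * ((r ω - 1) / Real.log 2) :=
        Finset.sum_le_sum fun ω _ => key ω
    _ = ((∑ ω, p ω * r ω) - ∑ ω, p ω) / Real.log 2 := by
        rw [← Finset.sum_sub_distrib, Finset.sum_div]
        refine Finset.sum_congr rfl fun ω _ => by ring
    _ ≤ 0 := by
        rw [hp1]
        exact div_nonpos_of_nonpos_of_nonneg (by linarith) hlog2.le

lemma pr_pair_le_right (hp : ∀ ω, 0 ≤ p ω) {α γ : Type*} [DecidableEq α] [DecidableEq γ]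
    (X : Ω → α) (Z : Ω → γ) (x : α) (z : γ) :
    pr p (fun ω => (X ω, Z ω)) (x, z) ≤ pr p Z z := by
  refine Finset.sum_le_sum fun ω _ => ?_
  by_cases h : (X ω, Z ω) = (x, z)
  · simp only [h, if_true]
    have : Z ω = z := (Prod.mk.injEq _ _ _ _ ▸ h).2
    simp [this]
  · simp only [h, if_false]
    split; exacts [hp ω, le_rfl]

/-- H(Z) ≤ H(X,Z), i.e. conditional entropy is nonnegative. -/
lemma condEnt_nonneg (hp : ∀ ω, 0 ≤ p ω) {α γ : Type*} [DecidableEq α] [DecidableEq γ]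
    (X : Ω → α) (Z : Ω → γ) : 0 ≤ condEnt p X Z := by
  rw [condEnt, sub_nonneg, ent_eq_sum_omega, ent_eq_sum_omega, neg_le_neg_iff]
  refine Finset.sum_le_sum fun ω _ => ?_
  rcases eq_or_lt_of_le (hp ω) with h0 | h0
  · rw [← h0]; simp
  · refine mul_le_mul_of_nonneg_left ?_ h0.le
    refine Real.logb_le_logb_of_le (by norm_num) ((h0.trans_le (p_le_pr p hp _ ω))) ?_
    exact pr_pair_le_right p hp X Z (X ω) (Z ω)

/-- Conditioning reduces entropy. -/
lemma condEnt_le_ent (hp : ∀ ω, 0 ≤ p ω) (hp1 : ∑ ω, p ω = 1)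
    {α γ : Type*} [DecidableEq α] [DecidableEq γ]
    (X : Ω → α) (Z : Ω → γ) : condEnt p X Z ≤ ent p X := by
  classical
  set XZ := fun ω => (X ω, Z ω) with hXZ
  set r : Ω → ℝ := fun ω => pr p X (X ω) * pr p Z (Z ω) / pr p XZ (XZ ω) with hr
  have hrpos : ∀ ω, 0 < p ω → 0 < r ω := by
    intro ω h0
    have h1 := h0.trans_le (p_le_pr p hp X ω)
    have h2 := h0.trans_le (p_le_pr p hp Z ω)
    have h3 := h0.trans_le (p_le_pr p hp XZ ω)
    exact div_pos (mul_pos h1 h2) h3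
  have hsum : ∑ ω, p ω * r ω ≤ 1 := by
    rw [← sum_comp_eq p XZ (fun v => pr p X v.1 * pr p Z v.2 / pr p XZ v)]
    have step1 : ∑ v ∈ Finset.univ.image XZ, pr p XZ v * (pr p X v.1 * pr p Z v.2 / pr p XZ v)
        ≤ ∑ v ∈ Finset.univ.image XZ, pr p X v.1 * pr p Z v.2 := by
      refine Finset.sum_le_sum fun v _ => ?_
      rcases eq_or_lt_of_le (pr_nonneg p hp XZ v) with h0 | h0
      · rw [← h0, zero_mul]
        exact mul_nonneg (pr_nonneg p hp X _) (pr_nonneg p hp Z _)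
      · rw [mul_div_cancel₀ _ h0.ne']
    have step2 : ∑ v ∈ Finset.univ.image XZ, pr p X v.1 * pr p Z v.2
        ≤ ∑ v ∈ (Finset.univ.image X) ×ˢ (Finset.univ.image Z), pr p X v.1 * pr p Z v.2 := by
      refine Finset.sum_le_sum_of_subset_of_nonneg ?_ (fun v _ _ =>
        mul_nonneg (pr_nonneg p hp X _) (pr_nonneg p hp Z _))
      intro v hv
      obtain ⟨ω, -, hω⟩ := Finset.mem_image.1 hv
      rw [Finset.mem_product]
      exact ⟨Finset.mem_image.2 ⟨ω, Finset.mem_univ _, by rw [← hω]⟩,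
             Finset.mem_image.2 ⟨ω, Finset.mem_univ _, by rw [← hω]⟩⟩
    have step3 : ∑ v ∈ (Finset.univ.image X) ×ˢ (Finset.univ.image Z),
        pr p X v.1 * pr p Z v.2 = 1 := by
      rw [Finset.sum_product, ← Finset.sum_mul_sum, sum_pr_eq_one p hp1 X,
        sum_pr_eq_one p hp1 Z, one_mul]
    linarith
  have hgibbs := gibbs p hp hp1 r hrpos hsum
  have hexp : ∑ ω, p ω * Real.logb 2 (r ω)
      = ∑ ω, p ω * (Real.logb 2 (pr p X (X ω)) + Real.logb 2 (pr p Z (Z ω))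
          - Real.logb 2 (pr p XZ (XZ ω))) := by
    refine sum_pmul_congr p hp fun ω h0 => ?_
    have h1 := h0.trans_le (p_le_pr p hp X ω)
    have h2 := h0.trans_le (p_le_pr p hp Z ω)
    have h3 := h0.trans_le (p_le_pr p hp XZ ω)
    rw [hr]
    rw [Real.logb_div (mul_pos h1 h2).ne' h3.ne', Real.logb_mul h1.ne' h2.ne']
  rw [hexp] at hgibbs
  have hsplit : ∑ ω, p ω * (Real.logb 2 (pr p X (X ω)) + Real.logb 2 (pr p Z (Z ω))
          - Real.logb 2 (pr p XZ (XZ ω)))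
      = (∑ ω, p ω * Real.logb 2 (pr p X (X ω)))
        + (∑ ω, p ω * Real.logb 2 (pr p Z (Z ω)))
        - (∑ ω, p ω * Real.logb 2 (pr p XZ (XZ ω))) := by
    rw [← Finset.sum_add_distrib, ← Finset.sum_sub_distrib]
    refine Finset.sum_congr rfl fun ω _ => by ring
  rw [hsplit] at hgibbs
  rw [condEnt, ent_eq_sum_omega, ent_eq_sum_omega, ent_eq_sum_omega]
  linarith

/-- Entropy is invariant under injective maps. -/
lemma ent_comp_inj {α γ : Type*} [DecidableEq α] [DecidableEq γ]
    (f : α → γ) (hf : Function.Injective f) (X : Ω → α) :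
    ent p (fun ω => f (X ω)) = ent p X := by
  classical
  have hpr : ∀ x, pr p (fun ω => f (X ω)) (f x) = pr p X x := by
    intro x
    refine Finset.sum_congr rfl fun ω _ => by simp [hf.eq_iff]
  unfold ent
  have himg : (Finset.univ.image fun ω => f (X ω)) = (Finset.univ.image X).image f := by
    rw [Finset.image_image]; rfl
  rw [himg, Finset.sum_image (fun a _ b _ h => hf h)]
  exact congrArg Neg.neg (Finset.sum_congr rfl fun x _ => by rw [hpr])

lemma cmi_eq_sub {α' β' γ' : Type*} [DecidableEq α'] [DecidableEq β'] [DecidableEq γ']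
    (X : Ω → α') (Y : Ω → β') (Z : Ω → γ') :
    cmi p X Y Z = condEnt p X Z - condEnt p X (fun ω => (Y ω, Z ω)) := by
  have h := ent_comp_inj p (fun t : (α' × β') × γ' => (t.1.1, (t.1.2, t.2)))
    (fun a b hab => by
      obtain ⟨⟨a1, a2⟩, a3⟩ := a; obtain ⟨⟨b1, b2⟩, b3⟩ := b
      simpa [Prod.ext_iff, and_assoc] using hab)
    (fun ω => ((X ω, Y ω), Z ω))
  simp only [cmi, condEnt]
  simp only at h
  rw [← h]
  ring

/-- Kraft's inequality for finite prefix-free sets of binary codewords. -/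
lemma kraft (T : Finset (List Bool))
    (h : ∀ a ∈ T, ∀ b ∈ T, a <+: b → a = b) :
    ∑ w ∈ T, ((2:ℝ) ^ w.length)⁻¹ ≤ 1 := by
  classical
  set L := T.sup List.length with hL
  have hlen : ∀ w ∈ T, w.length ≤ L := fun w hw => Finset.le_sup hw
  -- the extension sets
  set E : List Bool → Finset (List Bool) :=
    fun w => (Finset.univ : Finset (Fin (L - w.length) → Bool)).image
      (fun f => w ++ List.ofFn f) with hE
  have hcard : ∀ w, (E w).card = 2 ^ (L - w.length) := by
    intro w
    rw [hE]
    rw [Finset.card_image_of_injective _ (fun a b hab => by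
      exact List.ofFn_injective (List.append_cancel_left hab))]
    simp
  have hmemlen : ∀ (n : ℕ) (v : List Bool), v.length = n →
      v ∈ (Finset.univ : Finset (Fin n → Bool)).image List.ofFn := by
    intro n v hv
    subst hv
    exact Finset.mem_image.2 ⟨v.get, Finset.mem_univ _, List.ofFn_get v⟩
  have hsub : ∀ w ∈ T, E w ⊆ (Finset.univ : Finset (Fin L → Bool)).image List.ofFn := by
    intro w hw v hv
    obtain ⟨f, -, hf⟩ := Finset.mem_image.1 hv
    refine hmemlen L v ?_
    rw [← hf]
    simp [Nat.add_sub_cancel' (hlen w hw)]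
  have hdisj : ∀ a ∈ T, ∀ b ∈ T, a ≠ b → Disjoint (E a) (E b) := by
    intro a ha b hb hab
    rw [Finset.disjoint_left]
    intro v hva hvb
    obtain ⟨f, -, hf⟩ := Finset.mem_image.1 hva
    obtain ⟨g, -, hg⟩ := Finset.mem_image.1 hvb
    have hpa : a <+: v := hf ▸ List.prefix_append a _
    have hpb : b <+: v := hg ▸ List.prefix_append b _
    rcases List.prefix_or_prefix_of_prefix hpa hpb with hab' | hab'
    · exact hab (h a ha b hb hab')
    · exact hab ((h b hb a ha hab')).symm
  have hkey : ∑ w ∈ T, 2 ^ (L - w.length) ≤ 2 ^ L := by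
    calc ∑ w ∈ T, 2 ^ (L - w.length) = ∑ w ∈ T, (E w).card := by
          exact Finset.sum_congr rfl fun w _ => (hcard w).symm
      _ = (T.biUnion E).card := (Finset.card_biUnion hdisj).symm
      _ ≤ ((Finset.univ : Finset (Fin L → Bool)).image List.ofFn).card := by
          refine Finset.card_le_card ?_
          intro v hv
          obtain ⟨w, hw, hvw⟩ := Finset.mem_biUnion.1 hv
          exact hsub w hw hvw
      _ ≤ 2 ^ L := by
          refine (Finset.card_image_le.trans ?_)
          simp
  have hkeyR : (∑ w ∈ T, (2:ℝ) ^ (L - w.length)) ≤ 2 ^ L := by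
    exact_mod_cast hkey
  have h2L : (0:ℝ) < 2 ^ L := by positivity
  rw [← div_le_one h2L] at hkeyR
  rw [Finset.sum_div] at hkeyR
  refine le_trans (le_of_eq ?_) hkeyR
  refine Finset.sum_congr rfl fun w hw => ?_
  rw [pow_sub₀ (2:ℝ) (by norm_num) (hlen w hw)]
  field_simp

/-- Entropy of a prefix-free code is at most its expected length. -/
lemma ent_le_expected_length (hp : ∀ ω, 0 ≤ p ω) (hp1 : ∑ ω, p ω = 1)
    (s : Ω → List Bool) (hpf : PrefixFreeOn (Set.range s)) :
    ent p s ≤ ∑ ω, p ω * ((s ω).length : ℝ) := by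
  classical
  set r : Ω → ℝ := fun ω => ((2:ℝ) ^ (s ω).length)⁻¹ / pr p s (s ω) with hr
  have hrpos : ∀ ω, 0 < p ω → 0 < r ω := by
    intro ω h0
    exact div_pos (by positivity) (h0.trans_le (p_le_pr p hp s ω))
  have hsum : ∑ ω, p ω * r ω ≤ 1 := by
    rw [← sum_comp_eq p s (fun x => ((2:ℝ) ^ x.length)⁻¹ / pr p s x)]
    have step1 : ∑ x ∈ Finset.univ.image s, pr p s x * (((2:ℝ) ^ x.length)⁻¹ / pr p s x)
        ≤ ∑ x ∈ Finset.univ.image s, ((2:ℝ) ^ x.length)⁻¹ := by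
      refine Finset.sum_le_sum fun x _ => ?_
      rcases eq_or_lt_of_le (pr_nonneg p hp s x) with h0 | h0
      · rw [← h0, zero_mul]; positivity
      · rw [mul_div_cancel₀ _ h0.ne']
    refine step1.trans (kraft _ ?_)
    intro a ha b hb hab
    refine hpf a ?_ b ?_ hab
    · obtain ⟨ω, -, hω⟩ := Finset.mem_image.1 ha; exact ⟨ω, hω⟩
    · obtain ⟨ω, -, hω⟩ := Finset.mem_image.1 hb; exact ⟨ω, hω⟩
  have hgibbs := gibbs p hp hp1 r hrpos hsum
  have hexp : ∑ ω, p ω * Real.logb 2 (r ω)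
      = ∑ ω, p ω * (-((s ω).length : ℝ) - Real.logb 2 (pr p s (s ω))) := by
    refine sum_pmul_congr p hp fun ω h0 => ?_
    have h1 := h0.trans_le (p_le_pr p hp s ω)
    rw [hr]
    rw [Real.logb_div (by positivity) h1.ne', Real.logb_inv, Real.logb_pow,
      Real.logb_self_eq_one (by norm_num), mul_one]
  rw [hexp] at hgibbs
  have hsplit : ∑ ω, p ω * (-((s ω).length : ℝ) - Real.logb 2 (pr p s (s ω)))
      = -(∑ ω, p ω * ((s ω).length : ℝ)) - ∑ ω, p ω * Real.logb 2 (pr p s (s ω)) := by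
    rw [← Finset.sum_neg_distrib, ← Finset.sum_sub_distrib]
    refine Finset.sum_congr rfl fun ω _ => by ring
  rw [hsplit] at hgibbs
  rw [ent_eq_sum_omega]
  linarith

end Aux

/-- First half of the corrected proof of Theorem 4.1:
`∑ R(i) ≥ ∑ I(s(i); y^i | s^{i-1}, S^i)`, the causally conditioned
directed information `I(y^k → s^k ‖ S^k)`. -/
theorem sum_rate_ge_causal_directed_info [Fintype Ω] (p : Ω → ℝ)
    (hp : ∀ ω, 0 ≤ p ω) (hp1 : ∑ ω, p ω = 1)
    {α β : Type*} [DecidableEq α] [DecidableEq β]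
    (k : ℕ) (s : Fin (k + 1) → Ω → List Bool)
    (hpf : ∀ i, PrefixFreeOn (Set.range (s i)))
    (y : Fin (k + 1) → Ω → α) (S : Fin (k + 1) → Ω → β)
    (R : Fin (k + 1) → ℝ)
    (hR : ∀ i, R i = ∑ ω, p ω * ((s i ω).length : ℝ)) :
    (∑ i : Fin (k + 1),
        cmi p (s i)
          (fun ω => fun j : Fin (i.1 + 1) =>
            y ⟨j.1, Nat.lt_of_lt_of_le j.isLt i.isLt⟩ ω)
          (fun ω =>
            ((fun j : Fin i.1 => s ⟨j.1, Nat.lt_trans j.isLt i.isLt⟩ ω),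
             (fun j : Fin (i.1 + 1) =>
               S ⟨j.1, Nat.lt_of_lt_of_le j.isLt i.isLt⟩ ω)))) ≤
      ∑ i, R i := by
  classical
  refine Finset.sum_le_sum fun i _ => ?_
  set Y := fun ω => fun j : Fin (i.1 + 1) =>
    y ⟨j.1, Nat.lt_of_lt_of_le j.isLt i.isLt⟩ ω with hY
  set Z := fun ω =>
    ((fun j : Fin i.1 => s ⟨j.1, Nat.lt_trans j.isLt i.isLt⟩ ω),
     (fun j : Fin (i.1 + 1) => S ⟨j.1, Nat.lt_of_lt_of_le j.isLt i.isLt⟩ ω)) with hZ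
  have h0 := cmi_eq_sub p (s i) Y Z
  have h1 := condEnt_nonneg p hp (s i) (fun ω => (Y ω, Z ω))
  have h2 := condEnt_le_ent p hp hp1 (s i) Z
  have h3 := ent_le_expected_length p hp hp1 (s i) (hpf i)
  rw [hR i]
  linarith
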